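/- Let F be a field with char F ≠ 2 and char F ≠ 3, let β₁ ∈ F, and let A = A₈(β₁) = [[0, 1, 1, 0],[β₁, 1, 0, -1]]. Then the only invertible 2×2 matrix g over F with gA = A(g⊗g) is the identity matrix, and the only 2×2 matrix D with DA = A(D⊗I₂ + I₂⊗D) is the zero matrix. -/
import Mathlib


open Matrix Kronecker

/-- The matrix of structure constants (MSC) of a 2-dimensional algebra, as a
`2 × (2 × 2)` matrix: the column indexed by `(j,k)` corresponds to the product
`e_j · e_k`, so the columns in order `(0,0), (0,1), (1,0), (1,1)` carry the
entries `α₁ α₂ α₃ α₄` (first row) and `β₁ β₂ β₃ β₄` (second row). -/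
def MSC {F : Type*} [Field F] (a1 a2 a3 a4 b1 b2 b3 b4 : F) :
    Matrix (Fin 2) (Fin 2 × Fin 2) F :=
  Matrix.of fun i j => !![a1, a2, a3, a4; b1, b2, b3, b4] i (finProdFinEquiv j)

/-- `g` is an automorphism matrix of the algebra with MSC `A`:
`g` is invertible and `g • A = A • (g ⊗ g)`. -/
def IsAutoMat {F : Type*} [Field F] (A : Matrix (Fin 2) (Fin 2 × Fin 2) F)
    (g : Matrix (Fin 2) (Fin 2) F) : Prop :=
  IsUnit g ∧ g * A = A * (g ⊗ₖ g)

/-- `D` is a derivation matrix of the algebra with MSC `A`: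
`D • A = A • (D ⊗ I + I ⊗ D)`. -/
def IsDerMat {F : Type*} [Field F] (A : Matrix (Fin 2) (Fin 2 × Fin 2) F)
    (D : Matrix (Fin 2) (Fin 2) F) : Prop :=
  D * A = A * (D ⊗ₖ (1 : Matrix (Fin 2) (Fin 2) F) + (1 : Matrix (Fin 2) (Fin 2) F) ⊗ₖ D)

theorem stmt_9 {F : Type*} [Field F] (h2 : ringChar F ≠ 2) (h3 : ringChar F ≠ 3)
    (b1 : F)
    (A : Matrix (Fin 2) (Fin 2 × Fin 2) F)
    (hA : A = MSC 0 1 1 0 b1 1 0 (-1)) :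
    (∀ g : Matrix (Fin 2) (Fin 2) F, IsAutoMat A g ↔ g = 1) ∧
    (∀ D : Matrix (Fin 2) (Fin 2) F, IsDerMat A D ↔ D = 0) := by
  have h2' : (2 : F) ≠ 0 := Ring.two_ne_zero h2
  have h3' : (3 : F) ≠ 0 := by
    intro h
    have hd : ringChar F ∣ 3 := by
      have := (CharP.cast_eq_zero_iff F (ringChar F) 3).mpr
      exact (CharP.cast_eq_zero_iff F (ringChar F) 3).mp (by exact_mod_cast h)
    rcases (Nat.prime_three).eq_one_or_self_of_dvd _ hd with h1 | h1
    · exact CharP.ringChar_ne_one h1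
    · exact h3 h1
  subst hA
  constructor
  · intro g
    constructor
    · rintro ⟨hu, hg⟩
      have hdet : g 0 0 * g 1 1 - g 0 1 * g 1 0 ≠ 0 := by
        have := ((Matrix.isUnit_iff_isUnit_det g).mp hu)
        rw [Matrix.det_fin_two] at this
        exact isUnit_iff_ne_zero.mp this
      have e01 := congr_fun (congr_fun hg 0) (0,1)
      have e02 := congr_fun (congr_fun hg 0) (1,0)
      have e11 := congr_fun (congr_fun hg 1) (0,1)
      have e12 := congr_fun (congr_fun hg 1) (1,0)
      have e13 := congr_fun (congr_fun hg 1) (1,1)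
      simp only [MSC, Matrix.mul_apply, Fintype.sum_prod_type, Fin.sum_univ_succ,
        Fin.sum_univ_zero, finProdFinEquiv, Matrix.kroneckerMap_apply, Matrix.of_apply,
        Equiv.coe_fn_mk, Fin.isValue, Matrix.cons_val', Matrix.cons_val_zero,
        Matrix.cons_val_one, Matrix.head_cons, Matrix.empty_val', Matrix.cons_val_fin_one,
        Matrix.head_fin_const, Matrix.cons_val_succ] at e01 e02 e11 e12 e13
      norm_num at e01 e02 e11 e12 e13
      have hb : g 0 1 = 0 := by linear_combination e01 - e02
      have hd1 : g 1 1 * (g 1 1 - 1) = 0 := by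
        linear_combination e13 + (b1 * g 0 1 + g 1 1) * hb
      have hd : g 1 1 = 1 := by
        rcases mul_eq_zero.mp hd1 with h | h
        · exact absurd (by rw [h, hb]; ring) hdet
        · exact sub_eq_zero.mp h
      have hc : g 1 0 = 0 := by
        have h2c : 2 * g 1 0 = 0 := by
          linear_combination e12 + (b1 * g 0 0 + g 1 0) * hb - g 1 0 * hd
        exact (mul_eq_zero.mp h2c).resolve_left h2'
      have ha : g 0 0 = 1 := by
        linear_combination -e11 - b1 * g 0 0 * hb + (1 + g 1 1) * hc + (1 - g 0 0) * hd
      ext i j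
      fin_cases i <;> fin_cases j <;>
        simp [ha, hb, hc, hd, Matrix.one_apply]
    · rintro rfl
      exact ⟨isUnit_one, by rw [Matrix.one_kronecker_one, Matrix.one_mul, Matrix.mul_one]⟩
  · intro D
    constructor
    · intro hg
      unfold IsDerMat at hg
      have e00 := congr_fun (congr_fun hg 0) (0,0)
      have e02 := congr_fun (congr_fun hg 0) (1,0)
      have e03 := congr_fun (congr_fun hg 0) (1,1)
      have e11 := congr_fun (congr_fun hg 1) (0,1)
      have e12 := congr_fun (congr_fun hg 1) (1,0)
      simp only [MSC, Matrix.mul_apply, Matrix.add_apply, Fintype.sum_prod_type,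
        Fin.sum_univ_succ, Fin.sum_univ_zero, finProdFinEquiv, Matrix.kroneckerMap_apply,
        Matrix.of_apply, Equiv.coe_fn_mk, Fin.isValue, Matrix.cons_val', Matrix.cons_val_zero,
        Matrix.cons_val_one, Matrix.head_cons, Matrix.empty_val', Matrix.cons_val_fin_one,
        Matrix.head_fin_const, Matrix.cons_val_succ, Matrix.one_apply] at e00 e02 e03 e11 e12
      norm_num at e00 e02 e03 e11 e12
      have hd : D 1 1 = 0 := e02
      have hb : D 0 1 = 0 := by
        have h3b : 3 * D 0 1 = 0 := by linear_combination -e03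
        exact (mul_eq_zero.mp h3b).resolve_left h3'
      have hc : D 1 0 = 0 := by
        have h2c : 2 * D 1 0 = 0 := by linear_combination -e00 + b1 * hb
        exact (mul_eq_zero.mp h2c).resolve_left h2'
      have ha : D 0 0 = 0 := by linear_combination -e11 - b1 * hb + 2 * hc
      ext i j
      fin_cases i <;> fin_cases j <;> simp [ha, hb, hc, hd]
    · rintro rfl
      unfold IsDerMat
      simp
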